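/- (Deterministic Lyapunov descent for the normal-map step, eq. (cH).) Assume γ ≤ 1/(5(ρ + L)) and let δ > 0 satisfy δ ≤ min{(1 − γρ)γ/10, 1/(10L)}. For any z₁, e ∈ ℝ^p, set z₂ := z₁ − δ F^nor(z₁) + e, x₁ := prox_{γφ}(z₁), x₂ := prox_{γφ}(z₂). Then H(z₂) ≤ H(z₁) − (C₀ δ/2)‖F^nor(z₁)‖² − (1/(8δ))‖x₁ − x₂‖² + (1/δ)‖e‖². -/

import Mathlib

open scoped RealInnerProductSpace

section Aux
variable {F : Type*} [NormedAddCommGroup F] [InnerProductSpace ℝ F]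

lemma combo_norm_sq' (x y : F) (t : ℝ) :
    ‖(1-t)•x + t•y‖^2 = (1-t)*‖x‖^2 + t*‖y‖^2 - t*(1-t)*‖x-y‖^2 := by
  have h1 : ‖(1-t)•x + t•y‖^2 = ‖(1-t)•x‖^2 + 2*⟪(1-t)•x, t•y⟫ + ‖t•y‖^2 := by
    rw [@norm_add_sq_real]
  have h2 : ‖x - y‖^2 = ‖x‖^2 - 2*⟪x,y⟫ + ‖y‖^2 := by
    rw [@norm_sub_sq_real]
  rw [h1, norm_smul, norm_smul, real_inner_smul_left, real_inner_smul_right, h2]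
  simp only [Real.norm_eq_abs, mul_pow, sq_abs]
  ring

lemma norm_add4_sq (w x y z : F) :
    ‖w+x+y+z‖^2 = ‖w‖^2+‖x‖^2+‖y‖^2+‖z‖^2
      + 2*⟪w,x⟫+2*⟪w,y⟫+2*⟪w,z⟫+2*⟪x,y⟫+2*⟪x,z⟫+2*⟪y,z⟫ := by
  rw [norm_add_sq_real (w+x+y) z, norm_add_sq_real (w+x) y, norm_add_sq_real w x,
    inner_add_left, inner_add_left, inner_add_left]
  ring

lemma strong_prox' {ρ γ : ℝ} (hγ : 0 < γ) (hγρ : γ * ρ < 1)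
    (φ : F → ℝ) (hφwc : ConvexOn ℝ Set.univ (fun y => φ y + ρ / 2 * ‖y‖ ^ 2))
    (z x : F) (hx : IsMinOn (fun y => φ y + ‖y - z‖ ^ 2 / (2 * γ)) Set.univ x)
    (y : F) :
    2*γ*(φ x) + ‖x - z‖^2 + (1 - γ*ρ)*‖y - x‖^2 ≤ 2*γ*(φ y) + ‖y - z‖^2 := by
  have h2γ : (0:ℝ) < 2*γ := by linarith
  have hmin : ∀ w : F, 2*γ*(φ x) + ‖x - z‖^2 ≤ 2*γ*(φ w) + ‖w - z‖^2 := by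
    intro w
    have h := hx (Set.mem_univ w)
    simp only [Set.mem_setOf_eq] at h
    have h' := mul_le_mul_of_nonneg_left h h2γ.le
    rw [mul_add, mul_add, mul_comm (2*γ) (‖x-z‖^2/(2*γ)), mul_comm (2*γ) (‖w-z‖^2/(2*γ)),
      div_mul_cancel₀ _ h2γ.ne', div_mul_cancel₀ _ h2γ.ne'] at h'
    linarith
  set K := (1 - γ*ρ)*‖y - x‖^2 with hK
  have hKnn : 0 ≤ K := mul_nonneg (by linarith) (sq_nonneg _)
  have hstep : ∀ t : ℝ, 0 < t → t ≤ 1/2 →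
      2*γ*(φ x) + ‖x - z‖^2 + (1-t)*K ≤ 2*γ*(φ y) + ‖y - z‖^2 := by
    intro t ht0 ht1
    have hcvx := hφwc.2 (Set.mem_univ x) (Set.mem_univ y)
      (by linarith : (0:ℝ) ≤ 1 - t) ht0.le (by ring)
    simp only [smul_eq_mul] at hcvx
    have hm := hmin ((1-t) • x + t • y)
    have e1 : ‖(1-t)•x + t•y‖^2 = (1-t)*‖x‖^2 + t*‖y‖^2 - t*(1-t)*‖x-y‖^2 :=
      combo_norm_sq' x y t
    have e2 : ‖((1-t)•x + t•y) - z‖^2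
        = (1-t)*‖x-z‖^2 + t*‖y-z‖^2 - t*(1-t)*‖x-y‖^2 := by
      have hw : ((1-t)•x + t•y) - z = (1-t)•(x-z) + t•(y-z) := by
        rw [smul_sub, smul_sub, sub_smul, sub_smul, one_smul, one_smul]; abel
      rw [hw, combo_norm_sq']
      have h : (x - z) - (y - z) = x - y := by abel
      rw [h]
    rw [e1] at hcvx
    rw [e2] at hm
    have hcvx' := mul_le_mul_of_nonneg_left hcvx h2γ.le
    have hxy : ‖x - y‖^2 = ‖y - x‖^2 := by rw [norm_sub_rev]
    rw [hK, ← hxy]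
    have key2 : t * (2*γ*(φ x) + ‖x - z‖^2 + (1-t)*((1 - γ*ρ)*‖x - y‖^2))
        ≤ t * (2*γ*(φ y) + ‖y - z‖^2) := by nlinarith [hm, hcvx']
    have key3 := le_of_mul_le_mul_left key2 ht0
    linarith
  have hlim : ∀ ε : ℝ, 0 < ε →
      2*γ*(φ x) + ‖x - z‖^2 + K ≤ 2*γ*(φ y) + ‖y - z‖^2 + ε := by
    intro ε hε
    have hK1 : (0:ℝ) < K + 1 := by linarith
    set t := min (1/2) (ε/(K+1)) with ht
    have ht0 : 0 < t := lt_min (by norm_num) (div_pos hε hK1)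
    have ht1 : t ≤ 1/2 := min_le_left _ _
    have htK : t * K ≤ ε := by
      have h1 : t ≤ ε/(K+1) := min_le_right _ _
      have h2 : t * K ≤ (ε/(K+1)) * K := mul_le_mul_of_nonneg_right h1 hKnn
      have h3 : (ε/(K+1)) * K ≤ (ε/(K+1)) * (K+1) := by
        have h4 : (0:ℝ) ≤ ε/(K+1) := by positivity
        nlinarith
      rw [div_mul_cancel₀ _ hK1.ne'] at h3
      linarith
    have := hstep t ht0 ht1
    nlinarith
  linarith [le_of_forall_pos_le_add hlim]

lemma descent_lemma' [CompleteSpace F] {L : ℝ} (f : F → ℝ) (f' : F → F)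
    (hf : ∀ x, HasGradientAt f (f' x) x)
    (hlip : ∀ x y, ‖f' x - f' y‖ ≤ L * ‖x - y‖) (x y : F) :
    f y ≤ f x + ⟪f' x, y - x⟫ + L/2 * ‖y - x‖^2 := by
  set φ : ℝ → F := fun t => x + t • (y - x) with hφ
  have hline : ∀ t : ℝ, HasDerivAt φ (y - x) t := by
    intro t
    have := ((hasDerivAt_id t).smul_const (y - x)).const_add x
    rw [one_smul] at this
    exact this
  set g : ℝ → ℝ := fun t => f (φ t) - t * ⟪f' x, y - x⟫ - t^2 * (L/2) * ‖y - x‖^2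
    with hg
  have hgd : ∀ t : ℝ, HasDerivAt g
      (⟪f' (φ t), y - x⟫ - ⟪f' x, y - x⟫ - t * L * ‖y - x‖^2) t := by
    intro t
    have h1 : HasDerivAt (fun t => f (φ t)) (⟪f' (φ t), y - x⟫) t := by
      have hF := (hf (φ t)).hasFDerivAt
      have := hF.comp_hasDerivAt t (hline t)
      have h1' : HasDerivAt (f ∘ φ) (⟪f' (φ t), y - x⟫) t := by simpa using this
      exact h1'
    have h2 : HasDerivAt (fun t : ℝ => t * ⟪f' x, y - x⟫) (⟪f' x, y - x⟫) t := by
      simpa using (hasDerivAt_id t).mul_const (⟪f' x, y - x⟫)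
    have h3 : HasDerivAt (fun t : ℝ => t^2 * (L/2) * ‖y - x‖^2)
        (t * L * ‖y - x‖^2) t := by
      have := ((hasDerivAt_pow 2 t).mul_const (L/2)).mul_const (‖y - x‖^2)
      have e : t * L * ‖y - x‖^2 = ↑2 * t ^ (2 - 1) * (L / 2) * ‖y - x‖ ^ 2 := by push_cast; ring
      rw [e]
      exact this
    exact (h1.sub h2).sub h3
  have hderiv_nonpos : ∀ t ∈ Set.Icc (0:ℝ) 1,
      ⟪f' (φ t), y - x⟫ - ⟪f' x, y - x⟫ - t * L * ‖y - x‖^2 ≤ 0 := by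
    intro t ht
    have h1 : ⟪f' (φ t) - f' x, y - x⟫ ≤ ‖f' (φ t) - f' x‖ * ‖y - x‖ :=
      real_inner_le_norm _ _
    have h2 : ‖f' (φ t) - f' x‖ ≤ L * ‖φ t - x‖ := hlip _ _
    have h3 : ‖φ t - x‖ = t * ‖y - x‖ := by
      rw [hφ]; simp [norm_smul, abs_of_nonneg ht.1]
    have h4 : ⟪f' (φ t) - f' x, y - x⟫ = ⟪f' (φ t), y - x⟫ - ⟪f' x, y - x⟫ :=
      inner_sub_left _ _ _
    have hyx : (0:ℝ) ≤ ‖y - x‖ := norm_nonneg _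
    have h5 : ‖y - x‖ * ‖y - x‖ = ‖y - x‖^2 := (sq ‖y - x‖).symm
    have h6 := mul_le_mul_of_nonneg_right h2 hyx
    rw [h3] at h6
    nlinarith [h6, h1, h4]
  have hdiff : Differentiable ℝ g := fun t => (hgd t).differentiableAt
  have hanti : AntitoneOn g (Set.Icc (0:ℝ) 1) := by
    apply antitoneOn_of_deriv_nonpos (convex_Icc 0 1) hdiff.continuous.continuousOn
    · exact fun t _ => (hdiff t).differentiableWithinAt
    · intro t ht
      rw [(hgd t).deriv]
      refine hderiv_nonpos t ?_
      rw [interior_Icc] at ht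
      exact Set.Ioo_subset_Icc_self ht
  have h01 := hanti (Set.left_mem_Icc.mpr (by norm_num))
    (Set.right_mem_Icc.mpr (by norm_num)) (by norm_num)
  have hg0 : g 0 = f x := by simp [hg, hφ]
  have hg1 : g 1 = f y - ⟪f' x, y - x⟫ - L/2 * ‖y - x‖^2 := by
    have h : φ 1 = y := by simp [hφ]
    simp only [hg, h]
    ring
  rw [hg0, hg1] at h01
  linarith

end Aux
set_option maxHeartbeats 1000000

lemma Dcond_aux (α β θ C : ℝ) (hα : 0 ≤ α) (hβ : 0 ≤ β) (hab : α + β ≤ 1/5)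
    (hθ0 : 0 ≤ θ) (hθ : θ ≤ (1-β)/10) (hC1 : 1/3 ≤ C) (hC2 : C ≤ 1/2) :
    ((1-C) + C*α*θ)/4 + θ*(α+β)/2 - θ + (C*θ/2)*(1+α)^2 + (C*α/2)*(1-θ) + 1/8
      ≤ (1-θ)*(1-C)*(1-β) := by
  nlinarith [mul_nonneg hθ0 hα, mul_nonneg hθ0 hβ, sq_nonneg α, sq_nonneg θ,
    mul_nonneg (mul_nonneg hθ0 hα) hα, mul_nonneg hα hβ, sq_nonneg (α+β),
    mul_nonneg (mul_nonneg hθ0 hθ0) hα]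

lemma coefA (γ δ L C : ℝ) (hδ : 0 < δ) (hδγ : δ < γ) (hC : 1/3 ≤ C)
    (hγL : γ*L ≤ 1/5) :
    δ*C*(γ-δ)^2 + δ^2*C*γ*(γ-δ)*L + (4/5)*δ^2*C*(γ-δ) ≤ γ^2*δ*C - γ*δ^2*C := by
  have key : 0 ≤ δ*δ*C*(γ-δ)*(1/5 - γ*L) :=
    mul_nonneg (mul_nonneg (mul_nonneg (mul_nonneg hδ.le hδ.le) (by linarith))
      (by linarith)) (by linarith)
  nlinarith [key]

lemma coefE (γ δ L C : ℝ) (hγ : 0 < γ) (hδ : 0 < δ) (hδγ : δ < γ) (hC : 1/3 ≤ C)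
    (hC2 : C ≤ 1/2) (hδL : 10*δ*L ≤ 1) (hL : 0 < L) :
    δ*C + (5/4)*C*(γ-δ) + (2*γ*(1-C) + 2*γ*δ*C*L) ≤ 2*γ := by
  nlinarith [mul_pos hγ hδ, mul_nonneg hγ.le (mul_nonneg hδ.le hL.le)]

lemma coefD (γ δ ρ L C : ℝ) (hγ : 0 < γ) (hδ : 0 < δ) (hρ : 0 ≤ ρ) (hL : 0 < L)
    (h15 : γ*(ρ+L) ≤ 1/5) (hδ1 : 10*δ ≤ (1-γ*ρ)*γ)
    (hC : 1/3 ≤ C) (hC2 : C ≤ 1/2) :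
    δ*C*γ^2*L^2 + δ*C + 2*γ*δ*C*L + δ*γ*(ρ+L) - 2*δ + C*γ*(γ-δ)*L
      + γ*((1-C) + δ*C*L)/2 + γ/4 ≤ 2*(1-C)*(γ-δ)*(1-γ*ρ) := by
  have hθ : δ/γ ≤ (1 - γ*ρ)/10 := by
    rw [div_le_div_iff₀ hγ (by norm_num)]
    linarith
  have h := Dcond_aux (γ*L) (γ*ρ) (δ/γ) C (by positivity) (by positivity)
    (by nlinarith : γ*L + γ*ρ ≤ 1/5) (by positivity) hθ hC hC2
  rw [← sub_nonneg] at h ⊢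
  have e : 2*(1-C)*(γ-δ)*(1-γ*ρ) - (δ*C*γ^2*L^2 + δ*C + 2*γ*δ*C*L + δ*γ*(ρ+L) - 2*δ
        + C*γ*(γ-δ)*L + γ*((1-C) + δ*C*L)/2 + γ/4)
      = 2*γ*((1-δ/γ)*(1-C)*(1-γ*ρ) - (((1-C) + C*(γ*L)*(δ/γ))/4 + (δ/γ)*(γ*L+γ*ρ)/2
        - δ/γ + (C*(δ/γ)/2)*(1+γ*L)^2 + (C*(γ*L)/2)*(1-δ/γ) + 1/8)) := by
    field_simp
    ring
  rw [e]
  exact mul_nonneg (by linarith) h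

lemma final_scalar (γ δ ρ L C Ψ₁ Ψ₂ a b D E V P i1 i2 i3 i4 i5 i6 : ℝ)
    (hγ : 0 < γ) (hδ : 0 < δ) (hρ : 0 ≤ ρ) (hL : 0 < L)
    (h15 : γ*(ρ+L) ≤ 1/5) (hδ1 : 10*δ ≤ (1-γ*ρ)*γ) (hδL : 10*δ*L ≤ 1)
    (hC1 : 1/3 ≤ C) (hC2 : C ≤ 1/2)
    (ha : 0 ≤ a) (hD : 0 ≤ D) (hE : 0 ≤ E) (hV : 0 ≤ V) (hVL : V ≤ L*D)
    (hi2 : i2 ≤ a*E) (hi3 : i3 ≤ a*V) (hi4l : -(D*E) ≤ i4)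
    (hi5 : i5 ≤ V*D) (hi6 : i6 ≤ V*E)
    (hP : (1 - γ*ρ)*D^2 ≤ P)
    (hS3 : δ*i1 = P + i4)
    (hS1 : 2*γ*Ψ₂ ≤ 2*γ*Ψ₁ + γ*ρ*D^2 + γ*L*D^2 - 2*(γ-δ)*i1 - 2*D^2 - 2*i4)
    (hS5 : γ^2*b^2 = (γ-δ)^2*a^2 + γ^2*V^2 + D^2 + E^2 + 2*(γ-δ)*γ*i3
        + 2*(γ-δ)*i1 + 2*(γ-δ)*i2 + 2*γ*i5 + 2*γ*i6 + 2*i4) :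
    Ψ₂ + γ*C/2*b^2 ≤ Ψ₁ + γ*C/2*a^2 - C*δ/2*a^2 - 1/(8*δ)*D^2 + 1/δ*E^2 := by
  have hγρ1 : 0 < 1 - γ*ρ := by nlinarith only [mul_pos hγ hδ, hδ1, hγ, hδ]
  have hδγ : δ < γ := by nlinarith only [mul_nonneg hγ.le hρ, hδ1, hγ, hδ]
  have hγδpos : (0:ℝ) < γ - δ := by linarith
  have hCpos : (0:ℝ) < C := by linarith
  have h1C : (0:ℝ) < 1 - C := by linarith
  have hγL : γ*L ≤ 1/5 := by nlinarith only [mul_nonneg hγ.le hρ, h15, hγ]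
  have CAa := mul_le_mul_of_nonneg_right (coefA γ δ L C hδ hδγ hC1 hγL) (sq_nonneg a)
  have CDD := mul_le_mul_of_nonneg_right
    (coefD γ δ ρ L C hγ hδ hρ hL h15 hδ1 hC1 hC2) (sq_nonneg D)
  have CEE := mul_le_mul_of_nonneg_right
    (coefE γ δ L C hγ hδ hδγ hC1 hC2 hδL hL) (sq_nonneg E)
  have hS1δ := mul_le_mul_of_nonneg_left hS1 hδ.le
  have hS5C : δ*C*(γ^2*b^2) = δ*C*((γ-δ)^2*a^2 + γ^2*V^2 + D^2 + E^2 + 2*(γ-δ)*γ*i3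
      + 2*(γ-δ)*i1 + 2*(γ-δ)*i2 + 2*γ*i5 + 2*γ*i6 + 2*i4) := by rw [hS5]
  have hi1a : 2*C*(γ-δ)*(δ*i1) = 2*C*(γ-δ)*(P+i4) := by rw [hS3]
  have hi1b : 2*(γ-δ)*(δ*i1) = 2*(γ-δ)*(P+i4) := by rw [hS3]
  have TP := mul_le_mul_of_nonneg_left hP
    (by nlinarith only [h1C, hγδpos] : (0:ℝ) ≤ 2*(1-C)*(γ-δ))
  have Ti4 := mul_le_mul_of_nonneg_left hi4l
    (by nlinarith only [h1C, hγ] : (0:ℝ) ≤ 2*(1-C)*γ)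
  have hi3' : i3 ≤ a*(L*D) := le_trans hi3 (by nlinarith only [hVL, ha, hV])
  have hi5' : i5 ≤ L*D*D := le_trans hi5 (by nlinarith only [hVL, hD, hV])
  have hi6' : i6 ≤ L*D*E := le_trans hi6 (by nlinarith only [mul_le_mul_of_nonneg_right hVL hE])
  have hV2 : V^2 ≤ (L*D)^2 := by nlinarith only [hVL, hV, hD]
  have T3 := mul_le_mul_of_nonneg_left hi3'
    (by nlinarith only [mul_pos (mul_pos (mul_pos hδ hCpos) hγδpos) hγ] : (0:ℝ) ≤ 2*δ*C*(γ-δ)*γ)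
  have T2 := mul_le_mul_of_nonneg_left hi2
    (by nlinarith only [mul_pos (mul_pos hδ hCpos) hγδpos] : (0:ℝ) ≤ 2*δ*C*(γ-δ))
  have T5 := mul_le_mul_of_nonneg_left hi5'
    (by nlinarith only [mul_pos (mul_pos hγ hδ) hCpos] : (0:ℝ) ≤ 2*γ*δ*C)
  have T6 := mul_le_mul_of_nonneg_left hi6'
    (by nlinarith only [mul_pos (mul_pos hγ hδ) hCpos] : (0:ℝ) ≤ 2*γ*δ*C)
  have TV := mul_le_mul_of_nonneg_left hV2
    (by nlinarith only [mul_pos (mul_pos hδ hCpos) (mul_pos hγ hγ)] : (0:ℝ) ≤ δ*C*γ^2)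
  have Y1 : (0:ℝ) ≤ C*γ*(γ-δ)*L*(δ*a - D)^2 :=
    mul_nonneg (mul_nonneg (mul_nonneg (mul_nonneg hCpos.le hγ.le) hγδpos.le) hL.le)
      (sq_nonneg _)
  have Y2 : (0:ℝ) ≤ (C*(γ-δ)/5)*(2*δ*a - (5/2)*E)^2 :=
    mul_nonneg (by nlinarith only [mul_pos hCpos hγδpos]) (sq_nonneg _)
  have Y3 : (0:ℝ) ≤ (γ*((1-C)+δ*C*L)/2)*(D - 2*E)^2 := by
    have h0 : (0:ℝ) ≤ (1-C)+δ*C*L := by nlinarith only [mul_pos (mul_pos hδ hCpos) hL, hC2]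
    exact mul_nonneg (by nlinarith only [mul_nonneg hγ.le h0]) (sq_nonneg _)
  have hA : 2*γ*δ*Ψ₂ ≤ 2*γ*δ*Ψ₁ + δ*γ*ρ*D^2 + δ*γ*L*D^2 - 2*(γ-δ)*(P+i4)
      - 2*δ*D^2 - 2*δ*i4 := by
    linarith only [hS1δ, hi1b]
  have hB : δ*C*(γ^2*b^2) ≤ δ*C*(γ-δ)^2*a^2 + δ*C*γ^2*(L*D)^2 + δ*C*D^2 + δ*C*E^2
      + 2*δ*C*(γ-δ)*γ*(a*(L*D)) + 2*C*(γ-δ)*(P+i4) + 2*δ*C*(γ-δ)*(a*E)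
      + 2*γ*δ*C*(L*D*D) + 2*γ*δ*C*(L*D*E) + 2*δ*C*i4 := by
    linarith only [hS5C, hi1a, T3, T2, T5, T6, TV]
  have GKEY : 0 ≤ (2*γ*δ*Ψ₁ + γ^2*δ*C*a^2 - γ*δ^2*C*a^2 - (γ/4)*D^2 + 2*γ*E^2)
      - (2*γ*δ*Ψ₂ + δ*C*(γ^2*b^2)) := by
    linarith only [hA, hB, TP, Ti4, Y1, Y2, Y3, CAa, CDD, CEE]
  rw [← sub_nonneg]
  have e2 : Ψ₁ + γ*C/2*a^2 - C*δ/2*a^2 - 1/(8*δ)*D^2 + 1/δ*E^2 - (Ψ₂ + γ*C/2*b^2)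
      = (1/(2*γ*δ))*((2*γ*δ*Ψ₁ + γ^2*δ*C*a^2 - γ*δ^2*C*a^2 - (γ/4)*D^2 + 2*γ*E^2)
        - (2*γ*δ*Ψ₂ + δ*C*(γ^2*b^2))) := by
    field_simp
    ring
  rw [e2]
  exact mul_nonneg (le_of_lt (by positivity)) GKEY
/-- Deterministic Lyapunov descent for the normal-map step (eq. (cH)): for
`z₂ = z₁ − δ F^nor(z₁) + e`, the Lyapunov function
`H(z) = ψ(prox_{γφ}(z)) + (γC₀/2)‖F^nor(z)‖²` satisfies
`H(z₂) ≤ H(z₁) − (C₀δ/2)‖F^nor(z₁)‖² − (1/(8δ))‖x₁ − x₂‖² + (1/δ)‖e‖²`. -/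
theorem lyapunov_descent_normal_map_step
    {p : ℕ} (hp : 1 ≤ p) (ρ γ L δ : ℝ) (hρ : 0 ≤ ρ) (hγ : 0 < γ) (hγρ : γ * ρ < 1)
    (hL : 0 < L) (hγle : γ ≤ 1 / (5 * (ρ + L)))
    (hδ : 0 < δ) (hδle : δ ≤ min ((1 - γ * ρ) * γ / 10) (1 / (10 * L)))
    (φ : EuclideanSpace ℝ (Fin p) → ℝ)
    (hφlsc : LowerSemicontinuous φ)
    (hφwc : ConvexOn ℝ Set.univ (fun y => φ y + ρ / 2 * ‖y‖ ^ 2))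
    (prox : EuclideanSpace ℝ (Fin p) → EuclideanSpace ℝ (Fin p))
    (hprox : ∀ z, IsMinOn (fun y => φ y + ‖y - z‖ ^ 2 / (2 * γ)) Set.univ (prox z))
    (hproxUnique : ∀ z u,
      IsMinOn (fun y => φ y + ‖y - z‖ ^ 2 / (2 * γ)) Set.univ u → u = prox z)
    (f : EuclideanSpace ℝ (Fin p) → ℝ)
    (f' : EuclideanSpace ℝ (Fin p) → EuclideanSpace ℝ (Fin p))
    (hf : ∀ x, HasGradientAt f (f' x) x)
    (hlip : ∀ x y, ‖f' x - f' y‖ ≤ L * ‖x - y‖)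
    (ψ : EuclideanSpace ℝ (Fin p) → ℝ) (hψ : ∀ x, ψ x = f x + φ x)
    (Fnor : EuclideanSpace ℝ (Fin p) → EuclideanSpace ℝ (Fin p))
    (hFnor : ∀ z, Fnor z = f' (prox z) + γ⁻¹ • (z - prox z))
    (C₀ : ℝ) (hC₀ : C₀ = (3 - 4 * γ * ρ) / (2 * (3 - 4 * γ * ρ + 4 * γ ^ 2 * L ^ 2)))
    (H : EuclideanSpace ℝ (Fin p) → ℝ)
    (hH : ∀ z, H z = ψ (prox z) + γ * C₀ / 2 * ‖Fnor z‖ ^ 2)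
    (z₁ e z₂ : EuclideanSpace ℝ (Fin p))
    (hz₂ : z₂ = z₁ - δ • Fnor z₁ + e) :
    H z₂ ≤ H z₁ - C₀ * δ / 2 * ‖Fnor z₁‖ ^ 2
      - 1 / (8 * δ) * ‖prox z₁ - prox z₂‖ ^ 2 + 1 / δ * ‖e‖ ^ 2 := by
  obtain ⟨hδ1', hδ2'⟩ := le_min_iff.mp hδle
  have hρL : (0:ℝ) < 5*(ρ+L) := by linarith
  have h15 : γ*(ρ+L) ≤ 1/5 := by
    rw [le_div_iff₀ hρL] at hγle
    nlinarith only [hγle]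
  have hγL : γ*L ≤ 1/5 := by nlinarith only [h15, mul_nonneg hγ.le hρ]
  have hγρ5 : γ*ρ ≤ 1/5 := by nlinarith only [h15, mul_pos hγ hL]
  have hδ1 : 10*δ ≤ (1-γ*ρ)*γ := by linarith
  have hδL : 10*δ*L ≤ 1 := by
    rw [le_div_iff₀ (by positivity : (0:ℝ) < 10*L)] at hδ2'
    nlinarith only [hδ2']
  have hden : (0:ℝ) < 2*(3 - 4*γ*ρ + 4*γ^2*L^2) := by
    nlinarith only [sq_nonneg (γ*L), hγρ5]
  have hC1 : 1/3 ≤ C₀ := by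
    rw [hC₀, le_div_iff₀ hden]
    nlinarith only [mul_self_le_mul_self (mul_nonneg hγ.le hL.le) hγL, hγρ5]
  have hC2 : C₀ ≤ 1/2 := by
    rw [hC₀, div_le_iff₀ hden]
    nlinarith only [sq_nonneg (γ*L)]
  -- vector identities
  have hγg : ∀ z, γ • Fnor z = γ • f' (prox z) + (z - prox z) := by
    intro z
    rw [hFnor z, smul_add, smul_smul, mul_inv_cancel₀ hγ.ne', one_smul]
  have hΔ : z₁ - z₂ = δ • Fnor z₁ - e := by rw [hz₂]; abel
  have hg2 : γ • Fnor z₂ = (γ - δ) • Fnor z₁ + γ • (f' (prox z₂) - f' (prox z₁))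
      + (prox z₁ - prox z₂) + e := by
    have e2 := hγg z₂
    have e1 := hγg z₁
    have h3 : z₂ - prox z₂ = (z₁ - δ • Fnor z₁ + e) - prox z₂ :=
      congrArg (· - prox z₂) hz₂
    rw [e2, h3, sub_smul, e1, smul_sub]
    abel
  have hx2z2 : prox z₂ - z₂ = γ • f' (prox z₂) - γ • Fnor z₂ := by
    rw [hγg z₂]
    abel
  -- strong prox inequalities
  have h2' := strong_prox' hγ hγρ φ hφwc z₂ (prox z₂) (hprox z₂) (prox z₁)
  have h3' := strong_prox' hγ hγρ φ hφwc z₁ (prox z₁) (hprox z₁) (prox z₂)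
  have hdes := descent_lemma' f f' hf hlip (prox z₁) (prox z₂)
  have hrev2 : (1-γ*ρ)*‖prox z₂ - prox z₁‖^2 = (1-γ*ρ)*‖prox z₁ - prox z₂‖^2 := by
    rw [norm_sub_rev]
  have idP : ‖prox z₁ - z₂‖^2 + ‖prox z₂ - z₁‖^2 - ‖prox z₁ - z₁‖^2 - ‖prox z₂ - z₂‖^2
      = 2*⟪prox z₁ - prox z₂, z₁ - z₂⟫ := by
    simp only [norm_sub_sq_real, inner_sub_left, inner_sub_right]
    ring
  have hP : (1-γ*ρ)*‖prox z₁ - prox z₂‖^2 ≤ ⟪prox z₁ - prox z₂, z₁ - z₂⟫ := by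
    linarith only [h2', h3', idP, hrev2]
  have hPdef : ⟪prox z₁ - prox z₂, z₁ - z₂⟫
      = δ*⟪prox z₁ - prox z₂, Fnor z₁⟫ - ⟪prox z₁ - prox z₂, e⟫ := by
    rw [hΔ, inner_sub_right, real_inner_smul_right]
  have hS3 : δ*⟪prox z₁ - prox z₂, Fnor z₁⟫
      = ⟪prox z₁ - prox z₂, z₁ - z₂⟫ + ⟪prox z₁ - prox z₂, e⟫ := by
    rw [hPdef]; ring
  -- hS1 assembly
  have hdes2 := mul_le_mul_of_nonneg_left hdes (by linarith : (0:ℝ) ≤ 2*γ)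
  have E1sq' : 2*γ*(L/2*‖prox z₂ - prox z₁‖^2) = γ*L*‖prox z₁ - prox z₂‖^2 := by
    rw [norm_sub_rev]; ring
  have E5base : ⟪f' (prox z₁), prox z₂ - prox z₁⟫
      = ⟪prox z₁ - prox z₂, f' (prox z₂) - f' (prox z₁)⟫
        - ⟪prox z₁ - prox z₂, f' (prox z₂)⟫ := by
    simp only [inner_sub_left, inner_sub_right, real_inner_comm (f' (prox z₁))]
    ring
  have E5' : 2*γ*⟪f' (prox z₁), prox z₂ - prox z₁⟫
      = 2*γ*⟪prox z₁ - prox z₂, f' (prox z₂) - f' (prox z₁)⟫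
        - 2*γ*⟪prox z₁ - prox z₂, f' (prox z₂)⟫ := by
    rw [E5base]; ring
  have E2 : ‖prox z₁ - z₂‖^2 = ‖prox z₁ - prox z₂‖^2
      + 2*⟪prox z₁ - prox z₂, prox z₂ - z₂⟫ + ‖prox z₂ - z₂‖^2 := by
    have h : prox z₁ - z₂ = (prox z₁ - prox z₂) + (prox z₂ - z₂) := by abel
    rw [h, norm_add_sq_real]
  have E3' : 2*⟪prox z₁ - prox z₂, prox z₂ - z₂⟫
      = 2*(γ*⟪prox z₁ - prox z₂, f' (prox z₂)⟫
        - γ*⟪prox z₁ - prox z₂, Fnor z₂⟫) := by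
    rw [hx2z2, inner_sub_right, real_inner_smul_right, real_inner_smul_right]
  have E4' : 2*(γ*⟪prox z₁ - prox z₂, Fnor z₂⟫)
      = 2*((γ-δ)*⟪prox z₁ - prox z₂, Fnor z₁⟫
        + γ*⟪prox z₁ - prox z₂, f' (prox z₂) - f' (prox z₁)⟫
        + ‖prox z₁ - prox z₂‖^2 + ⟪prox z₁ - prox z₂, e⟫) := by
    have h : γ*⟪prox z₁ - prox z₂, Fnor z₂⟫ = ⟪prox z₁ - prox z₂, γ • Fnor z₂⟫ :=
      (real_inner_smul_right _ _ _).symm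
    rw [h, hg2, inner_add_right, inner_add_right, inner_add_right,
      real_inner_smul_right, real_inner_smul_right, real_inner_self_eq_norm_sq]
  have hS1 : 2*γ*(f (prox z₂) + φ (prox z₂)) ≤ 2*γ*(f (prox z₁) + φ (prox z₁))
      + γ*ρ*‖prox z₁ - prox z₂‖^2 + γ*L*‖prox z₁ - prox z₂‖^2
      - 2*(γ-δ)*⟪prox z₁ - prox z₂, Fnor z₁⟫ - 2*‖prox z₁ - prox z₂‖^2
      - 2*⟪prox z₁ - prox z₂, e⟫ := by
    linarith only [h2', hdes2, E1sq', E5', E2, E3', E4']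
  -- hS5 assembly
  have hS5 : γ^2*‖Fnor z₂‖^2 = (γ-δ)^2*‖Fnor z₁‖^2
      + γ^2*‖f' (prox z₂) - f' (prox z₁)‖^2 + ‖prox z₁ - prox z₂‖^2 + ‖e‖^2
      + 2*(γ-δ)*γ*⟪Fnor z₁, f' (prox z₂) - f' (prox z₁)⟫
      + 2*(γ-δ)*⟪prox z₁ - prox z₂, Fnor z₁⟫
      + 2*(γ-δ)*⟪Fnor z₁, e⟫
      + 2*γ*⟪prox z₁ - prox z₂, f' (prox z₂) - f' (prox z₁)⟫
      + 2*γ*⟪f' (prox z₂) - f' (prox z₁), e⟫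
      + 2*⟪prox z₁ - prox z₂, e⟫ := by
    have hnsm : ‖γ • Fnor z₂‖^2 = γ^2*‖Fnor z₂‖^2 := by
      rw [norm_smul]
      simp only [Real.norm_eq_abs, mul_pow, sq_abs]
    rw [← hnsm, hg2, norm_add4_sq]
    simp only [norm_smul, Real.norm_eq_abs, mul_pow, sq_abs, real_inner_smul_left,
      real_inner_smul_right]
    rw [real_inner_comm (Fnor z₁) (prox z₁ - prox z₂),
      real_inner_comm (f' (prox z₂) - f' (prox z₁)) (prox z₁ - prox z₂)]
    ring
  -- remaining scalar bounds
  have hVL : ‖f' (prox z₂) - f' (prox z₁)‖ ≤ L*‖prox z₁ - prox z₂‖ := by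
    have h := hlip (prox z₂) (prox z₁)
    rwa [norm_sub_rev (prox z₂) (prox z₁)] at h
  have hi4l : -(‖prox z₁ - prox z₂‖*‖e‖) ≤ ⟪prox z₁ - prox z₂, e⟫ :=
    (abs_le.mp (abs_real_inner_le_norm _ _)).1
  have hi5 : ⟪prox z₁ - prox z₂, f' (prox z₂) - f' (prox z₁)⟫
      ≤ ‖f' (prox z₂) - f' (prox z₁)‖*‖prox z₁ - prox z₂‖ :=
    (real_inner_le_norm _ _).trans_eq (mul_comm _ _)
  simp only [hH, hψ]
  exact final_scalar γ δ ρ L C₀ (f (prox z₁) + φ (prox z₁)) (f (prox z₂) + φ (prox z₂))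
    ‖Fnor z₁‖ ‖Fnor z₂‖ ‖prox z₁ - prox z₂‖ ‖e‖ ‖f' (prox z₂) - f' (prox z₁)‖
    ⟪prox z₁ - prox z₂, z₁ - z₂⟫ ⟪prox z₁ - prox z₂, Fnor z₁⟫ ⟪Fnor z₁, e⟫
    ⟪Fnor z₁, f' (prox z₂) - f' (prox z₁)⟫ ⟪prox z₁ - prox z₂, e⟫
    ⟪prox z₁ - prox z₂, f' (prox z₂) - f' (prox z₁)⟫ ⟪f' (prox z₂) - f' (prox z₁), e⟫
    hγ hδ hρ hL h15 hδ1 hδL hC1 hC2 (norm_nonneg _) (norm_nonneg _) (norm_nonneg _)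
    (norm_nonneg _) hVL (real_inner_le_norm _ _) (real_inner_le_norm _ _) hi4l hi5
    (real_inner_le_norm _ _) hP hS3 hS1 hS5
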